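/- Let X be a random variable with E[X] = -a < 0 and A_t := E[|X|^t] < ∞ for some t ∈ (1, 2]. If y > 0 satisfies y^{t-1} ≥ (e-1) A_t / a, then h_0 := (1/y) log(1 + a y^{t-1} / A_t) satisfies E[e^{h_0 X} 1_{X ≤ y}] ≤ 1. -/

import Mathlib

open MeasureTheory ProbabilityTheory

lemma exp_le_quad {x : ℝ} (hx : x ≤ 0) : Real.exp x ≤ 1 + x + x ^ 2 / 2 := by
  have key : AntitoneOn (fun u : ℝ => 1 + u + u ^ 2 / 2 - Real.exp u) (Set.Iic 0) := by
    apply antitoneOn_of_deriv_nonpos (convex_Iic 0)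
    · exact Continuous.continuousOn (by fun_prop)
    · intro u _
      exact (by fun_prop : DifferentiableAt ℝ (fun u : ℝ => 1 + u + u ^ 2 / 2 - Real.exp u) u).differentiableWithinAt
    · intro u hu
      rw [interior_Iic] at hu
      have H : HasDerivAt (fun u : ℝ => 1 + u + u ^ 2 / 2 - Real.exp u)
          ((0 + 1 + (2 : ℕ) * u ^ 1 / 2) - Real.exp u) u := by
        exact (((hasDerivAt_const u (1:ℝ)).add (hasDerivAt_id u)).add
          ((hasDerivAt_pow 2 u).div_const 2)).sub (Real.hasDerivAt_exp u)
      rw [H.deriv]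
      have := Real.add_one_le_exp u
      simp only [pow_one]
      push_cast
      linarith
  have := key (hx : x ∈ Set.Iic (0:ℝ)) (Set.self_mem_Iic) hx
  simp only [Real.exp_zero] at this
  linarith

lemma two_mul_le {x : ℝ} (hx : 0 ≤ x) :
    2 * (Real.exp x - 1 - x) ≤ x * (Real.exp x - 1) := by
  have hg1 : ∀ u : ℝ, 0 ≤ u → 0 ≤ (u - 1) * Real.exp u + 1 := by
    have mono : MonotoneOn (fun u : ℝ => (u - 1) * Real.exp u + 1) (Set.Ici 0) := by
      apply monotoneOn_of_deriv_nonneg (convex_Ici 0)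
      · exact Continuous.continuousOn (by fun_prop)
      · intro u _
        exact (by fun_prop : DifferentiableAt ℝ (fun u : ℝ => (u - 1) * Real.exp u + 1) u).differentiableWithinAt
      · intro u hu
        rw [interior_Ici] at hu
        have H : HasDerivAt (fun u : ℝ => (u - 1) * Real.exp u + 1)
            (1 * Real.exp u + (u - 1) * Real.exp u) u := by
          simpa using (((hasDerivAt_id u).sub_const 1).mul (Real.hasDerivAt_exp u)).add_const 1
        rw [H.deriv]
        nlinarith [Real.exp_pos u, (Set.mem_Ioi.mp hu).le]
    intro u hu
    have := mono (Set.self_mem_Ici) hu hu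
    simpa using this
  have mono : MonotoneOn (fun u : ℝ => u * Real.exp u + u - 2 * Real.exp u + 2)
      (Set.Ici 0) := by
    apply monotoneOn_of_deriv_nonneg (convex_Ici 0)
    · exact Continuous.continuousOn (by fun_prop)
    · intro u _
      exact (by fun_prop : DifferentiableAt ℝ (fun u : ℝ => u * Real.exp u + u - 2 * Real.exp u + 2) u).differentiableWithinAt
    · intro u hu
      rw [interior_Ici] at hu
      have H : HasDerivAt (fun u : ℝ => u * Real.exp u + u - 2 * Real.exp u + 2)
          (1 * Real.exp u + u * Real.exp u + 1 - 2 * Real.exp u) u := by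
        simpa using ((((hasDerivAt_id u).mul (Real.hasDerivAt_exp u)).add (hasDerivAt_id u)).sub
          ((Real.hasDerivAt_exp u).const_mul 2)).add_const 2
      rw [H.deriv]
      have := hg1 u hu.le
      linarith
  have := mono (Set.self_mem_Ici) hx hx
  simp only [Real.exp_zero] at this
  nlinarith

lemma ratio_mono {u v : ℝ} (hu : 0 < u) (huv : u ≤ v) :
    (Real.exp u - 1 - u) * v ^ 2 ≤ (Real.exp v - 1 - v) * u ^ 2 := by
  have mono : MonotoneOn (fun x : ℝ => (Real.exp x - 1 - x) / x ^ 2) (Set.Ici u) := by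
    apply monotoneOn_of_deriv_nonneg (convex_Ici u)
    · apply ContinuousOn.div (Continuous.continuousOn (by fun_prop))
        (Continuous.continuousOn (by fun_prop))
      intro x hx
      have : 0 < x := lt_of_lt_of_le hu hx
      positivity
    · intro x hx
      rw [interior_Ici] at hx
      have hx0 : 0 < x := lt_trans hu hx
      apply DifferentiableAt.differentiableWithinAt
      apply DifferentiableAt.div (by fun_prop) (by fun_prop)
      positivity
    · intro x hx
      rw [interior_Ici] at hx
      have hx0 : 0 < x := lt_trans hu hx
      have Hnum : HasDerivAt (fun x : ℝ => Real.exp x - 1 - x) (Real.exp x - 0 - 1) x := by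
        exact (((Real.hasDerivAt_exp x).sub_const 1).sub (hasDerivAt_id x)).congr_deriv (by simp)
      have Hden : HasDerivAt (fun x : ℝ => x ^ 2) ((2:ℕ) * x ^ 1) x := hasDerivAt_pow 2 x
      have H := Hnum.div Hden (by positivity)
      rw [show (fun x : ℝ => (Real.exp x - 1 - x) / x ^ 2) = ((fun x : ℝ => Real.exp x - 1 - x) / fun x => x ^ 2) from rfl, H.deriv]
      have key := two_mul_le hx0.le
      have h1 : 0 ≤ (Real.exp x - 0 - 1) * x ^ 2 - (Real.exp x - 1 - x) * ((2:ℕ) * x ^ 1) := by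
        push_cast
        nlinarith
      positivity
  have huv' : (Real.exp u - 1 - u) / u ^ 2 ≤ (Real.exp v - 1 - v) / v ^ 2 :=
    mono (Set.self_mem_Ici) huv huv
  have hv : 0 < v := lt_of_lt_of_le hu huv
  rw [div_le_div_iff₀ (by positivity) (by positivity)] at huv'
  exact huv'

lemma exp_pointwise {t u v : ℝ} (ht1 : 1 < t) (ht2 : t ≤ 2) (hv : 0 < v) (huv : |u| ≤ v) :
    Real.exp u ≤ 1 + u + (Real.exp v - 1 - v) * (|u| / v) ^ t := by
  have hC : v ^ 2 / 2 ≤ Real.exp v - 1 - v := by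
    have := Real.quadratic_le_exp_of_nonneg hv.le
    linarith
  have hC0 : 0 < Real.exp v - 1 - v := lt_of_lt_of_le (by positivity) hC
  rcases eq_or_ne u 0 with rfl | hu0
  · have : (0:ℝ) ≤ (Real.exp v - 1 - v) * (|(0:ℝ)| / v) ^ t := by
      apply mul_nonneg hC0.le (Real.rpow_nonneg (by positivity) t)
    simp only [Real.exp_zero]
    linarith
  have hw0 : 0 < |u| / v := by
    have : 0 < |u| := abs_pos.mpr hu0
    positivity
  have hw1 : |u| / v ≤ 1 := (div_le_one hv).mpr huv
  have hpow : (|u| / v) ^ (2:ℝ) ≤ (|u| / v) ^ t :=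
    Real.rpow_le_rpow_of_exponent_ge hw0 hw1 ht2
  have hpow2 : (|u| / v) ^ (2:ℝ) = u ^ 2 / v ^ 2 := by
    rw [Real.rpow_two, div_pow, sq_abs]
  have key : Real.exp u - 1 - u ≤ (Real.exp v - 1 - v) * (u ^ 2 / v ^ 2) := by
    rw [show (Real.exp v - 1 - v) * (u ^ 2 / v ^ 2)
        = ((Real.exp v - 1 - v) * u ^ 2) / v ^ 2 from by ring,
      le_div_iff₀ (by positivity : (0:ℝ) < v ^ 2)]
    rcases le_or_gt u 0 with hu | hu
    · have h1 := exp_le_quad hu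
      have h2 : u ^ 2 * (v ^ 2 / 2) ≤ u ^ 2 * (Real.exp v - 1 - v) := by
        apply mul_le_mul_of_nonneg_left hC (sq_nonneg u)
      nlinarith [sq_nonneg u, sq_nonneg v]
    · have habs : |u| = u := abs_of_pos hu
      exact ratio_mono hu (habs ▸ huv)
  calc Real.exp u ≤ 1 + u + (Real.exp v - 1 - v) * (u ^ 2 / v ^ 2) := by linarith
    _ ≤ 1 + u + (Real.exp v - 1 - v) * (|u| / v) ^ t := by
        have := mul_le_mul_of_nonneg_left (hpow2 ▸ hpow) hC0.le
        linarith

set_option maxHeartbeats 1000000 in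
/-- If `E[X] = -a < 0`, `A_t = E[|X|^t] < ∞` for `t ∈ (1,2]`, and `y^{t-1} ≥ (e-1)A_t/a`,
then `h_0 = (1/y) log(1 + a y^{t-1}/A_t)` satisfies `E[e^{h_0 X} 1_{X ≤ y}] ≤ 1`. -/
theorem stmt_4 {Ω : Type*} [MeasureSpace Ω] [IsProbabilityMeasure (ℙ : Measure Ω)]
    (X : Ω → ℝ) (hX : Measurable X) (hint : Integrable X ℙ)
    (a : ℝ) (ha : 0 < a) (hmean : ∫ ω, X ω ∂ℙ = -a)
    (t : ℝ) (ht1 : 1 < t) (ht2 : t ≤ 2)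
    (At : ℝ) (hAt : ∫ ω, |X ω| ^ t ∂ℙ = At)
    (hintt : Integrable (fun ω => |X ω| ^ t) ℙ)
    (y : ℝ) (hy : 0 < y)
    (hcond : (Real.exp 1 - 1) * At / a ≤ y ^ (t - 1)) :
    (∫ ω in {ω | X ω ≤ y},
        Real.exp ((1 / y) * Real.log (1 + a * y ^ (t - 1) / At) * X ω) ∂ℙ) ≤ 1 := by
  set P := y ^ (t - 1) with hP
  have hP0 : 0 < P := Real.rpow_pos_of_pos hy _
  have hAtnn : 0 ≤ At := by
    rw [← hAt]; exact integral_nonneg fun ω => Real.rpow_nonneg (abs_nonneg _) t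
  have hAt0 : 0 < At := by
    rcases hAtnn.lt_or_eq with h | h
    · exact h
    · exfalso
      have h0 : (fun ω => |X ω| ^ t) =ᵐ[ℙ] 0 := by
        rw [← integral_eq_zero_iff_of_nonneg
          (fun ω => Real.rpow_nonneg (abs_nonneg _) t) hintt]
        rw [hAt]; exact h.symm
      have hX0 : X =ᵐ[ℙ] 0 := by
        filter_upwards [h0] with ω hω
        have ht0 : t ≠ 0 := by linarith
        simp only [Pi.zero_apply] at hω ⊢
        have := (Real.rpow_eq_zero (abs_nonneg (X ω)) ht0).mp hω
        exact abs_eq_zero.mp this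
      have : ∫ ω, X ω ∂ℙ = 0 := by
        rw [integral_congr_ae hX0]; simp
      rw [hmean] at this; linarith
  set r := a * P / At with hr
  have hr0 : 0 < r := by positivity
  have hre : Real.exp 1 - 1 ≤ r := by
    have he1 : (0:ℝ) < Real.exp 1 - 1 := by
      have := Real.exp_one_gt_d9; linarith
    rw [hr, le_div_iff₀ hAt0]
    have := mul_le_mul_of_nonneg_right hcond ha.le
    rw [div_mul_cancel₀ _ ha.ne'] at this
    linarith
  set L := Real.log (1 + r) with hL
  have hL1 : 1 ≤ L := by
    rw [hL, Real.le_log_iff_exp_le (by linarith)]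
    linarith
  have hL0 : 0 < L := lt_of_lt_of_le one_pos hL1
  have hLr : L ≤ r := by
    have := Real.log_le_sub_one_of_pos (show (0:ℝ) < 1 + r by linarith)
    rw [← hL] at this; linarith
  set h := 1 / y * L with hh
  have hh0 : 0 < h := by rw [hh]; positivity
  have hhy : h * y = L := by rw [hh]; field_simp
  have hexp : Real.exp (h * y) = 1 + r := by
    rw [hhy, hL, Real.exp_log (by linarith)]
  -- the comparison function
  set g : Ω → ℝ := fun ω =>
    1 + h * (if |X ω| ≤ y then X ω else 0) + (r - L) * (|X ω| ^ t / y ^ t) with hg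
  have claim : ∀ ω : Ω, X ω ≤ y → Real.exp (h * X ω) ≤ g ω := by
    intro ω hxy
    set x := X ω with hx
    by_cases hax : |x| ≤ y
    · have habs : |h * x| ≤ h * y := by
        rw [abs_mul, abs_of_pos hh0]
        exact mul_le_mul_of_nonneg_left hax hh0.le
      have hbd := exp_pointwise ht1 ht2 (by positivity : 0 < h * y) habs
      have e1 : |h * x| / (h * y) = |x| / y := by
        rw [abs_mul, abs_of_pos hh0, mul_div_mul_left _ _ hh0.ne']
      have e2 : (|x| / y) ^ t = |x| ^ t / y ^ t := Real.div_rpow (abs_nonneg x) hy.le t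
      rw [hexp, e1, e2, hhy] at hbd
      have e3 : (1 + r - 1 - L) = r - L := by ring
      rw [e3] at hbd
      simp only [hg, ← hx, if_pos hax]
      linarith
    · have hxneg : x < 0 := by
        by_contra hc
        push_neg at hc
        exact hax (by rwa [abs_of_nonneg hc])
      have h1 : Real.exp (h * x) ≤ 1 := by
        rw [show (1:ℝ) = Real.exp 0 from (Real.exp_zero).symm]
        apply Real.exp_le_exp.mpr
        nlinarith
      have h2 : 0 ≤ (r - L) * (|x| ^ t / y ^ t) := by
        apply mul_nonneg (by linarith)
        positivity
      simp only [hg, ← hx, if_neg hax]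
      linarith
  -- measurability and integrability
  have measA : MeasurableSet {ω | X ω ≤ y} := measurableSet_le hX measurable_const
  have measB : MeasurableSet {ω | |X ω| ≤ y} := measurableSet_le hX.abs measurable_const
  have hTind : (fun ω => if |X ω| ≤ y then X ω else 0)
      = Set.indicator {ω | |X ω| ≤ y} X := by
    funext ω
    by_cases hc : |X ω| ≤ y
    · simp [Set.indicator_apply, hc, Set.mem_setOf_eq]
    · simp [Set.indicator_apply, hc, Set.mem_setOf_eq]
  have intT : Integrable (fun ω => if |X ω| ≤ y then X ω else 0) ℙ := by
    rw [hTind]; exact hint.indicator measB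
  have intT2 : Integrable (fun ω => (r - L) * (|X ω| ^ t / y ^ t)) ℙ :=
    (hintt.div_const _).const_mul _
  have intG : Integrable g ℙ := by
    rw [hg]
    exact ((integrable_const 1).add (intT.const_mul h)).add intT2
  have intExp : IntegrableOn (fun ω => Real.exp (h * X ω)) {ω | X ω ≤ y} ℙ := by
    apply Integrable.mono' (integrable_const (1 + r))
    · exact ((Real.measurable_exp.comp (hX.const_mul h)).aestronglyMeasurable)
    · rw [ae_restrict_iff' measA]
      apply ae_of_all
      intro ω hω
      rw [Real.norm_eq_abs, abs_of_pos (Real.exp_pos _), ← hexp]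
      apply Real.exp_le_exp.mpr
      exact mul_le_mul_of_nonneg_left hω hh0.le
  -- chain of inequalities
  have step1 : (∫ ω in {ω | X ω ≤ y}, Real.exp (h * X ω) ∂ℙ)
      ≤ ∫ ω in {ω | X ω ≤ y}, g ω ∂ℙ :=
    setIntegral_mono_on intExp intG.integrableOn measA (fun ω hω => claim ω hω)
  have step2 : (∫ ω in {ω | X ω ≤ y}, g ω ∂ℙ) ≤ ∫ ω, g ω ∂ℙ := by
    have hsplit := integral_add_compl measA intG
    have hnn : 0 ≤ ∫ ω in {ω | X ω ≤ y}ᶜ, g ω ∂ℙ := by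
      apply setIntegral_nonneg measA.compl
      intro ω hω
      have hgt : y < X ω := not_le.mp hω
      have hax : ¬ |X ω| ≤ y := by
        rw [not_le]; exact lt_of_lt_of_le hgt (le_abs_self _)
      simp only [hg, if_neg hax, mul_zero]
      have h2 : 0 ≤ (r - L) * (|X ω| ^ t / y ^ t) := by
        apply mul_nonneg (by linarith); positivity
      linarith
    linarith
  have hval : ∫ ω, g ω ∂ℙ
      = 1 + h * (∫ ω, (if |X ω| ≤ y then X ω else 0) ∂ℙ) + (r - L) * (At / y ^ t) := by
    have I1 : Integrable (fun ω : Ω => 1 + h * (if |X ω| ≤ y then X ω else 0)) ℙ :=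
      (integrable_const 1).add (intT.const_mul h)
    have e0 : ∫ ω, g ω ∂ℙ
        = (∫ ω, (1 + h * (if |X ω| ≤ y then X ω else 0)) ∂ℙ)
          + ∫ ω, (r - L) * (|X ω| ^ t / y ^ t) ∂ℙ := by
      rw [hg]; exact integral_add I1 intT2
    have e1 : (∫ ω, (1 + h * (if |X ω| ≤ y then X ω else 0)) ∂ℙ)
        = 1 + h * ∫ ω, (if |X ω| ≤ y then X ω else 0) ∂ℙ := by
      rw [integral_add (integrable_const 1) (intT.const_mul h), integral_const,
        integral_const_mul]
      simp [measure_univ]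
    have e2 : (∫ ω, (r - L) * (|X ω| ^ t / y ^ t) ∂ℙ) = (r - L) * (At / y ^ t) := by
      rw [integral_const_mul, integral_div, hAt]
    rw [e0, e1, e2]
  -- bound the truncated first moment
  have truncbound : (∫ ω, (if |X ω| ≤ y then X ω else 0) ∂ℙ) ≤ -a + At / P := by
    set U : Ω → ℝ := fun ω => if |X ω| ≤ y then 0 else X ω with hU
    have hTU : (fun ω => if |X ω| ≤ y then X ω else 0) = fun ω => X ω - U ω := by
      funext ω; by_cases hc : |X ω| ≤ y <;> simp [hU, hc]
    have intU : Integrable U ℙ := by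
      have : U = fun ω => X ω - (if |X ω| ≤ y then X ω else 0) := by
        funext ω; by_cases hc : |X ω| ≤ y <;> simp [hU, hc]
      rw [this]; exact hint.sub intT
    have hUb : ∀ ω, -U ω ≤ |X ω| ^ t / P := by
      intro ω
      by_cases hc : |X ω| ≤ y
      · simp only [hU, if_pos hc, neg_zero]
        positivity
      · simp only [hU, if_neg hc]
        push_neg at hc
        have habs0 : 0 < |X ω| := lt_trans hy hc
        have hpow : P ≤ |X ω| ^ (t - 1) := by
          rw [hP]
          apply Real.rpow_le_rpow hy.le hc.le (by linarith)
        have hsplit : |X ω| ^ t = |X ω| ^ (t - 1) * |X ω| := by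
          have hq := Real.rpow_add habs0 (t - 1) 1
          rw [Real.rpow_one, show t - 1 + 1 = t from by ring] at hq
          exact hq
        have h1 : -X ω ≤ |X ω| := neg_le_abs _
        have h2 : |X ω| ≤ |X ω| ^ t / P := by
          rw [le_div_iff₀ hP0, hsplit]
          calc |X ω| * P ≤ |X ω| * |X ω| ^ (t - 1) := by
                exact mul_le_mul_of_nonneg_left hpow habs0.le
            _ = |X ω| ^ (t - 1) * |X ω| := mul_comm _ _
        linarith
    have hmono : (∫ ω, -U ω ∂ℙ) ≤ ∫ ω, |X ω| ^ t / P ∂ℙ :=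
      integral_mono intU.neg (hintt.div_const _) hUb
    rw [integral_neg] at hmono
    rw [integral_div, hAt] at hmono
    rw [hTU, integral_sub hint intU, hmean]
    linarith
  -- final arithmetic
  have hAtr : At * r = a * P := by
    rw [hr]; field_simp
  have hyt : y ^ t = P * y := by
    have hq := Real.rpow_add hy (t - 1) 1
    rw [Real.rpow_one, show t - 1 + 1 = t from by ring] at hq
    rw [hP]; exact hq
  have e1 : At / P = a / r := by
    rw [div_eq_div_iff hP0.ne' hr0.ne']
    linarith [hAtr]
  have e2 : At / y ^ t = a / (r * y) := by
    rw [hyt, div_eq_div_iff (by positivity) (by positivity)]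
    nlinarith [hAtr]
  have hyne : y ≠ 0 := hy.ne'
  have hrne : r ≠ 0 := hr0.ne'
  have key2 : h * (-a + At / P) + (r - L) * (At / y ^ t) ≤ 0 := by
    rw [e1, e2, hh]
    have expand : 1 / y * L * (-a + a / r) + (r - L) * (a / (r * y))
        = a * (1 - L) / y := by
      field_simp
      ring
    rw [expand]
    apply div_nonpos_of_nonpos_of_nonneg _ hy.le
    nlinarith
  have hfin : h * (∫ ω, (if |X ω| ≤ y then X ω else 0) ∂ℙ)
      ≤ h * (-a + At / P) :=
    mul_le_mul_of_nonneg_left truncbound hh0.le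
  calc (∫ ω in {ω | X ω ≤ y}, Real.exp (h * X ω) ∂ℙ)
      ≤ ∫ ω, g ω ∂ℙ := le_trans step1 step2
    _ = 1 + h * (∫ ω, (if |X ω| ≤ y then X ω else 0) ∂ℙ) + (r - L) * (At / y ^ t) := hval
    _ ≤ 1 + h * (-a + At / P) + (r - L) * (At / y ^ t) := by linarith
    _ ≤ 1 := by linarith
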